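/- Pigeonhole lemma for sequences over finite products: let c ≥ 1, N ≥ 1, and let (η_i)_{i<M} be a sequence of elements of a product ∏_{j∈J} R_j where each |R_j| ≤ c. Define L_N = c+1, L_{N-k} = c^{L_N+⋯+L_{N-k+1}+1}+1 for k = 1,…,N−1, L_0 = 0, and M = L_0+⋯+L_N+1. Then there exist indices n(0) < n'(0) < n(1) < n'(1) < ⋯ < n(N−1) < n'(N−1) < n(N) ≤ M−1 such that for each k < N, the projections of η_{n(k)} and η_{n'(k)} agree on any prescribed family of at most (L_{k+1}+⋯+L_N) coordinates depending only on indices in later blocks. -/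

import Mathlib

/-- Pigeonhole lemma for sequences over finite products: let `c, N ≥ 1`,
`L_0 = 0`, `L_N = c+1`, `L_{N-k} = c^{L_N+⋯+L_{N-k+1}+1}+1` for `1 ≤ k ≤ N-1`, set
`S k = L_0 + ⋯ + L_k` and `M = S N + 1`, and let `(η_i)_{i<M}` be a sequence in a
product `∏_{j∈J} R_j` with `|R_j| ≤ c`, together with a prescribed coordinate `j_m`
for each position `m`. Then there are indices
`n(0) < n'(0) < n(1) < ⋯ < n(N-1) < n'(N-1) < n(N) ≤ M-1`, with `n(k), n'(k)` lying in
the block `I_k = [S k, S (k+1) - 1]` and `n(N) = S N`, such that for each `k < N` the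
projections of `η_{n(k)}` and `η_{n'(k)}` agree on all prescribed coordinates `j_m`
with `m` in the later blocks `I_{k+1} ∪ ⋯ ∪ I_N`. -/
theorem pigeonhole_blocks {J : Type*} (R : J → Type*) [∀ j, Fintype (R j)]
    (c N : ℕ) (hc : 1 ≤ c) (hN : 1 ≤ N) (hcard : ∀ j, Fintype.card (R j) ≤ c)
    (L : ℕ → ℕ) (hL0 : L 0 = 0) (hLN : L N = c + 1)
    (hLk : ∀ k, 1 ≤ k → k ≤ N - 1 →
      L (N - k) = c ^ ((∑ i ∈ Finset.Icc (N - k + 1) N, L i) + 1) + 1)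
    (S : ℕ → ℕ) (hS : ∀ k, S k = ∑ i ∈ Finset.range (k + 1), L i)
    (M : ℕ) (hM : M = S N + 1)
    (η : ℕ → ∀ j, R j) (jmap : ℕ → J) :
    ∃ nn nn' : ℕ → ℕ,
      (∀ k < N, S k ≤ nn k ∧ nn k < nn' k ∧ nn' k < S (k + 1)) ∧
      (∀ k, k + 1 < N → nn' k < nn (k + 1)) ∧
      nn N = S N ∧ nn N ≤ M - 1 ∧ (N - 1 < N → nn' (N - 1) < nn N) ∧
      (∀ k < N, ∀ m : ℕ, S (k + 1) ≤ m → m ≤ S N →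
        η (nn k) (jmap m) = η (nn' k) (jmap m)) := by
  -- basic facts about S
  have hSstep : ∀ k, S (k + 1) = S k + L (k + 1) := by
    intro k
    rw [hS, hS, Finset.sum_range_succ]
  have hsum : ∀ k, k + 1 ≤ N →
      S N = S (k + 1) + ∑ i ∈ Finset.Icc (k + 2) N, L i := by
    intro k hk
    rw [hS, hS, Finset.range_eq_Ico, Finset.range_eq_Ico, ← Finset.Ico_add_one_right_eq_Icc]
    exact (Finset.sum_Ico_consecutive L (Nat.zero_le (k + 2))
      (by omega : k + 2 ≤ N + 1)).symm
  -- for each block a pair of matching positions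
  have key : ∀ k, ∃ a b : ℕ, k < N →
      S k ≤ a ∧ a < b ∧ b < S (k + 1) ∧
      ∀ m : ℕ, S (k + 1) ≤ m → m ≤ S N → η a (jmap m) = η b (jmap m) := by
    intro k
    by_cases hk : k < N
    swap
    · exact ⟨0, 0, fun h => absurd h hk⟩
    have hsumk := hsum k hk
    have hSle : S (k + 1) ≤ S N := by omega
    -- the block length exceeds the number of possible tuples
    have hlt : c ^ (S N - S (k + 1) + 1) < L (k + 1) := by
      by_cases hk1 : k + 1 = N
      · have : S N - S (k + 1) = 0 := by rw [hk1]; omega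
        rw [this, pow_one, hk1, hLN]; omega
      · have h1 : 1 ≤ N - (k + 1) := by omega
        have h2 : N - (k + 1) ≤ N - 1 := by omega
        have := hLk (N - (k + 1)) h1 h2
        have e1 : N - (N - (k + 1)) = k + 1 := by omega
        rw [e1] at this
        have e3 : k + 1 + 1 = k + 2 := by omega
        rw [e3] at this
        have e2 : ∑ i ∈ Finset.Icc (k + 2) N, L i = S N - S (k + 1) := by
          omega
        rw [e2] at this
        omega
    -- pigeonhole
    set T := (Finset.Icc (S (k + 1)) (S N) : Finset ℕ) with hT
    have hcardT : T.card = S N - S (k + 1) + 1 := by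
      rw [hT, Nat.card_Icc]; omega
    let f : Fin (L (k + 1)) → (∀ m : T, R (jmap m)) :=
      fun t m => η (S k + t) (jmap m)
    have hcodom : Fintype.card (∀ m : T, R (jmap m)) < Fintype.card (Fin (L (k + 1))) := by
      rw [Fintype.card_fin]
      calc Fintype.card (∀ m : T, R (jmap m))
          = ∏ m : T, Fintype.card (R (jmap m)) := Fintype.card_pi
        _ ≤ ∏ _m : T, c := Finset.prod_le_prod' (fun m _ => hcard _)
        _ = c ^ T.card := by rw [Finset.prod_const, Finset.card_univ, Fintype.card_coe]
        _ = c ^ (S N - S (k + 1) + 1) := by rw [hcardT]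
        _ < L (k + 1) := hlt
    obtain ⟨t, t', hne, heq⟩ := Fintype.exists_ne_map_eq_of_card_lt f hcodom
    have hagree : ∀ m : ℕ, S (k + 1) ≤ m → m ≤ S N →
        η (S k + t) (jmap m) = η (S k + t') (jmap m) := by
      intro m h1 h2
      have hm : m ∈ T := by rw [hT]; exact Finset.mem_Icc.mpr ⟨h1, h2⟩
      exact congrFun heq ⟨m, hm⟩
    rcases Ne.lt_or_gt (fun h : (t : ℕ) = t' => hne (Fin.ext h)) with h | h
    · exact ⟨S k + t, S k + t', fun _ => ⟨Nat.le_add_right _ _, by omega,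
        by rw [hSstep]; have := t'.isLt; omega, hagree⟩⟩
    · exact ⟨S k + t', S k + t, fun _ => ⟨Nat.le_add_right _ _, by omega,
        by rw [hSstep]; have := t.isLt; omega,
        fun m h1 h2 => (hagree m h1 h2).symm⟩⟩
  choose a b hab using key
  refine ⟨fun k => if k < N then a k else S N, b, ?_, ?_, ?_, ?_, ?_, ?_⟩
  · intro k hk
    obtain ⟨h1, h2, h3, _⟩ := hab k hk
    simp only [if_pos hk]
    exact ⟨h1, h2, h3⟩
  · intro k hk
    have h3 := (hab k (by omega)).2.2.1
    have h1 := (hab (k + 1) hk).1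
    simp only [if_pos hk]
    omega
  · simp
  · simp [hM]
  · intro h
    have h3 := (hab (N - 1) h).2.2.1
    have : N - 1 + 1 = N := by omega
    rw [this] at h3
    simp only [if_neg (lt_irrefl N)]
    exact h3
  · intro k hk m h1 h2
    simp only [if_pos hk]
    exact (hab k hk).2.2.2 m h1 h2
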